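/- arXiv:1603.08723 — 2 statements merged into one kernel-verified Lean document; each statement's English description precedes it below -/
import Mathlib

section
/- For β > 0 define f : [0,∞) → (0, Γ(β)] by f(t) = ∫_t^∞ e^{−y} y^{β−1} dy. Then f is a strictly decreasing continuous bijection from [0,∞) onto (0, Γ(β)], and its inverse g : (0, Γ(β)] → [0,∞) satisfies lim_{u→0⁺} g(u) / log(1/u) = 1. -/
open Filter MeasureTheory Set

namespace Stmt15Aux

variable {β : ℝ}

noncomputable def φ (β : ℝ) : ℝ → ℝ := fun y => Real.exp (-y) * y ^ (β - 1)

noncomputable def F (β : ℝ) : ℝ → ℝ := fun t => ∫ y in Set.Ioi t, φ β y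

lemma hInt (hβ : 0 < β) : IntegrableOn (φ β) (Set.Ioi 0) :=
  Real.GammaIntegral_convergent hβ

lemma hIntt (hβ : 0 < β) {t : ℝ} (ht : 0 ≤ t) : IntegrableOn (φ β) (Set.Ioi t) :=
  (hInt hβ).mono_set (Set.Ioi_subset_Ioi ht)

lemma hIntIoc (hβ : 0 < β) {s t : ℝ} (hs : 0 ≤ s) :
    IntegrableOn (φ β) (Set.Ioc s t) :=
  (hInt hβ).mono_set (Set.Ioc_subset_Ioi_self.trans (Set.Ioi_subset_Ioi hs))

lemma φpos {y : ℝ} (hy : 0 < y) : 0 < φ β y :=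
  mul_pos (Real.exp_pos _) (Real.rpow_pos_of_pos hy _)

lemma hsplit0 (hβ : 0 < β) {s t : ℝ} (hs : 0 ≤ s) (hst : s ≤ t) :
    (∫ y in Set.Ioi s, φ β y) = (∫ y in Set.Ioc s t, φ β y) + ∫ y in Set.Ioi t, φ β y := by
  rw [← MeasureTheory.setIntegral_union (Set.Ioc_disjoint_Ioi le_rfl)
    measurableSet_Ioi (hIntIoc hβ hs) (hIntt hβ (hs.trans hst)),
    Set.Ioc_union_Ioi_eq_Ioi hst]

lemma hsplit (hβ : 0 < β) {s t : ℝ} (hs : 0 ≤ s) (hst : s ≤ t) :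
    F β s = (∫ y in Set.Ioc s t, φ β y) + F β t := hsplit0 hβ hs hst

lemma hmid (hβ : 0 < β) {s t : ℝ} (hs : 0 ≤ s) (hst : s < t) :
    0 < ∫ y in Set.Ioc s t, φ β y := by
  rw [← intervalIntegral.integral_of_le hst.le]
  apply intervalIntegral.intervalIntegral_pos_of_pos_on
  · rw [intervalIntegrable_iff_integrableOn_Ioc_of_le hst.le]
    exact hIntIoc hβ hs
  · exact fun y hy => φpos (lt_of_le_of_lt hs hy.1)
  · exact hst

lemma hposInt (hβ : 0 < β) {t : ℝ} (ht : 0 ≤ t) : 0 < ∫ y in Set.Ioi t, φ β y := by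
  have h1 := hsplit0 hβ ht (by linarith : t ≤ t + 1)
  have h2 : 0 ≤ ∫ y in Set.Ioi (t + 1), φ β y :=
    setIntegral_nonneg measurableSet_Ioi fun y hy =>
      (φpos (lt_of_le_of_lt (by linarith) (Set.mem_Ioi.1 hy))).le
  have h3 := hmid hβ ht (by linarith : t < t + 1)
  linarith

lemma hpos (hβ : 0 < β) {t : ℝ} (ht : 0 ≤ t) : 0 < F β t := hposInt hβ ht

-- continuity
lemma hcont (hβ : 0 < β) : ContinuousOn (F β) (Set.Ici 0) := by
  intro t ht
  have hIcc : IntegrableOn (φ β) (Set.Icc 0 (t + 1)) := by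
    rw [integrableOn_Icc_iff_integrableOn_Ioc]
    exact (hInt hβ).mono_set Set.Ioc_subset_Ioi_self
  have hpr := intervalIntegral.continuousOn_primitive (f := φ β) (μ := volume) hIcc
  have hC : ContinuousOn (F β) (Set.Icc 0 (t + 1)) := by
    refine ((continuousOn_const (c := ∫ y in Set.Ioi (0:ℝ), φ β y)).sub hpr).congr fun x hx => ?_
    have := hsplit0 hβ le_rfl hx.1
    simp only [F, Pi.sub_apply]
    linarith
  have hmem : Set.Icc (0:ℝ) (t + 1) ∈ nhdsWithin t (Set.Ici 0) := by
    refine mem_of_superset (inter_mem_nhdsWithin (Set.Ici 0) (Iio_mem_nhds (lt_add_one t))) ?_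
    exact fun x hx => ⟨hx.1, hx.2.le⟩
  exact (hC t ⟨ht, by linarith⟩).mono_of_mem_nhdsWithin hmem

-- tendsto 0
lemma htend0 (hβ : 0 < β) :
    Tendsto (F β) atTop (nhds 0) := by
  have h1 := MeasureTheory.intervalIntegral_tendsto_integral_Ioi 0 (hInt hβ) tendsto_id
  have h2 : Tendsto (fun t : ℝ => (∫ y in Set.Ioi (0:ℝ), φ β y) - ∫ y in (0:ℝ)..t, φ β y)
      atTop (nhds 0) := by
    have := (tendsto_const_nhds (x := ∫ y in Set.Ioi (0:ℝ), φ β y) (f := atTop)).sub h1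
    simpa using this
  refine h2.congr' ?_
  filter_upwards [eventually_ge_atTop (0:ℝ)] with t ht
  rw [intervalIntegral.integral_of_le ht]
  have := hsplit0 hβ le_rfl ht
  simp only [F]
  linarith

-- lower bound
lemma hlow (hβ : 0 < β) {t : ℝ} (ht : 1 ≤ t) :
    Real.exp (-(t + 1)) * (t + 1) ^ (-|β - 1|) ≤ F β t := by
  have h0t : (0:ℝ) ≤ t := by linarith
  have hsp := hsplit hβ h0t (by linarith : t ≤ t + 1)
  have h2 : 0 ≤ F β (t + 1) := (hpos hβ (by linarith)).le
  have h3 : Real.exp (-(t + 1)) * (t + 1) ^ (-|β - 1|) ≤ ∫ y in Set.Ioc t (t + 1), φ β y := by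
    have hc : (∫ _ in Set.Ioc t (t + 1), (Real.exp (-(t + 1)) * (t + 1) ^ (-|β - 1|) : ℝ))
        = Real.exp (-(t + 1)) * (t + 1) ^ (-|β - 1|) := by
      rw [MeasureTheory.setIntegral_const]
      simp [Real.volume_Ioc]
    rw [← hc]
    refine MeasureTheory.setIntegral_mono_on (integrableOn_const ?_)
      (hIntIoc hβ h0t) measurableSet_Ioc fun y hy => ?_
    · rw [Real.volume_Ioc]; exact ENNReal.ofReal_ne_top
    · have hy1 : 1 ≤ y := le_trans ht hy.1.le
      have hy0 : 0 < y := by linarith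
      refine mul_le_mul ?_ ?_ (Real.rpow_nonneg (by linarith) _) (Real.exp_pos _).le
      · exact Real.exp_le_exp.2 (by linarith [hy.2])
      · rcases le_total 1 β with hb | hb
        · have e1 : (t + 1 : ℝ) ^ (-|β - 1|) ≤ 1 :=
            Real.rpow_le_one_of_one_le_of_nonpos (by linarith) (neg_nonpos.2 (abs_nonneg _))
          have e2 : (1:ℝ) ≤ y ^ (β - 1) := Real.one_le_rpow hy1 (by linarith)
          linarith
        · have habs : |β - 1| = 1 - β := by rw [abs_of_nonpos (by linarith)]; ring
          have e1 : (t + 1 : ℝ) ^ (β - 1) ≤ y ^ (β - 1) :=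
            Real.rpow_le_rpow_of_nonpos hy0 (by linarith [hy.2]) (by linarith)
          rw [habs]
          calc (t + 1 : ℝ) ^ (-(1 - β)) = (t + 1 : ℝ) ^ (β - 1) := by ring_nf
            _ ≤ y ^ (β - 1) := e1
  linarith

-- upper bound
lemma hup (hβ : 0 < β) {ε : ℝ} (hε : 0 < ε) (hε1 : ε < 1) :
    ∃ C : ℝ, 0 < C ∧ ∀ t : ℝ, 1 ≤ t →
      (F β t) ≤ C * Real.exp (-(1 - ε) * t) := by
  obtain ⟨C₀, hC₀pos, hC₀⟩ : ∃ C₀ : ℝ, 0 < C₀ ∧ ∀ y : ℝ, 1 ≤ y →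
      y ^ (β - 1) ≤ C₀ * Real.exp (ε * y) := by
    have h := tendsto_rpow_mul_exp_neg_mul_atTop_nhds_zero (β - 1) ε hε
    obtain ⟨A, hA⟩ := eventually_atTop.1 (h.eventually (eventually_le_nhds one_pos))
    set A' := max A 1 with hA'
    have hcont2 : ContinuousOn (fun y : ℝ => y ^ (β - 1) * Real.exp (-ε * y))
        (Set.Icc 1 A') :=
      (ContinuousOn.rpow_const continuousOn_id fun y hy => Or.inl (by
        have : (1:ℝ) ≤ y := hy.1; positivity)).mul
        (Real.continuous_exp.comp (continuous_const.mul continuous_id)).continuousOn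
    obtain ⟨x₀, _, hx₀⟩ := isCompact_Icc.exists_isMaxOn
      ⟨1, Set.mem_Icc.2 ⟨le_rfl, le_max_right _ _⟩⟩ hcont2
    set B := x₀ ^ (β - 1) * Real.exp (-ε * x₀)
    refine ⟨max B 1, lt_of_lt_of_le one_pos (le_max_right _ _), fun y hy => ?_⟩
    have hb : y ^ (β - 1) * Real.exp (-ε * y) ≤ max B 1 := by
      rcases le_total y A' with hc | hc
      · exact le_trans (hx₀ ⟨hy, hc⟩) (le_max_left _ _)
      · exact le_trans (hA y (le_trans (le_max_left A 1) hc)) (le_max_right _ _)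
    have := mul_le_mul_of_nonneg_right hb (Real.exp_pos (ε * y)).le
    rwa [mul_assoc, ← Real.exp_add, neg_mul, neg_add_cancel, Real.exp_zero, mul_one] at this
  refine ⟨C₀ / (1 - ε), div_pos hC₀pos (by linarith), fun t ht => ?_⟩
  have hval : (∫ y in Set.Ioi t, C₀ * Real.exp (-(1 - ε) * y))
      = C₀ / (1 - ε) * Real.exp (-(1 - ε) * t) := by
    have hd : ∀ x ∈ Set.Ici t, HasDerivAt
        (fun y => -(Real.exp (-(1 - ε) * y) / (1 - ε)) * C₀) (C₀ * Real.exp (-(1 - ε) * x)) x := by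
      intro x _
      have h1 : HasDerivAt (fun y : ℝ => -(1 - ε) * y) (-(1 - ε)) x := by
        simpa using (hasDerivAt_id x).const_mul (-(1 - ε))
      have h2 := ((h1.exp.div_const (1 - ε)).neg.mul_const C₀)
      have hne : (1:ℝ) - ε ≠ 0 := by linarith
      have heq : -(Real.exp (-(1 - ε) * x) * -(1 - ε) / (1 - ε)) * C₀
          = C₀ * Real.exp (-(1 - ε) * x) := by
        field_simp
      rw [← heq]
      exact h2
    have hint : IntegrableOn (fun x => C₀ * Real.exp (-(1 - ε) * x)) (Set.Ioi t) :=
      (exp_neg_integrableOn_Ioi t (by linarith : (0:ℝ) < 1 - ε)).const_mul C₀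
    have htd : Tendsto (fun y => -(Real.exp (-(1 - ε) * y) / (1 - ε)) * C₀) atTop (nhds 0) := by
      have he : Tendsto (fun y : ℝ => Real.exp (-(1 - ε) * y)) atTop (nhds 0) := by
        have h0 : Tendsto (fun y : ℝ => (1 - ε) * y) atTop atTop :=
          Tendsto.const_mul_atTop (by linarith) tendsto_id
        refine (Real.tendsto_exp_neg_atTop_nhds_zero.comp h0).congr fun y => ?_
        simp only [Function.comp_apply]
        congr 1
        ring
      have h2 := ((he.neg.div_const (1 - ε)).mul_const C₀)
      have h3 : (0:ℝ) = -0 / (1 - ε) * C₀ := by ring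
      rw [h3]
      exact h2.congr fun y => by ring
    have := MeasureTheory.integral_Ioi_of_hasDerivAt_of_tendsto' hd hint htd
    rw [this]
    field_simp
    ring
  calc (F β t) ≤ ∫ y in Set.Ioi t, C₀ * Real.exp (-(1 - ε) * y) := by
        refine MeasureTheory.setIntegral_mono_on (hIntt hβ (by linarith))
          ((exp_neg_integrableOn_Ioi t (by linarith : (0:ℝ) < 1 - ε)).const_mul C₀)
          measurableSet_Ioi fun y hy => ?_
        have hy1 : 1 ≤ y := le_trans ht (Set.mem_Ioi.1 hy).le
        have h1 := hC₀ y hy1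
        have h2 := mul_le_mul_of_nonneg_left h1 (Real.exp_pos (-y)).le
        calc Real.exp (-y) * y ^ (β - 1) ≤ Real.exp (-y) * (C₀ * Real.exp (ε * y)) := h2
          _ = C₀ * Real.exp (-(1 - ε) * y) := by
            rw [← mul_assoc, mul_comm (Real.exp (-y)) C₀, mul_assoc, ← Real.exp_add]
            ring_nf
    _ = C₀ / (1 - ε) * Real.exp (-(1 - ε) * t) := hval

lemma hlogt (hβ : 0 < β) :
    Tendsto (fun t => -Real.log (F β t) / t) atTop (nhds 1) := by
  rw [tendsto_order]
  constructor
  · intro b hb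
    set ε : ℝ := min ((1 - b) / 2) (1 / 2) with hε
    have hε0 : 0 < ε := lt_min (by linarith) (by norm_num)
    have hε1 : ε < 1 := lt_of_le_of_lt (min_le_right _ _) (by norm_num)
    have hεb : b < 1 - ε := by
      have h := min_le_left ((1 - b) / 2) (1 / 2)
      have h' : ε ≤ (1 - b) / 2 := h
      linarith
    obtain ⟨C, hC, hCb⟩ := hup hβ hε0 hε1
    have h1 : Tendsto (fun t : ℝ => (1 - ε) - Real.log C / t) atTop (nhds (1 - ε)) := by
      have h0 := tendsto_const_nhds (x := (1 - ε : ℝ)) (f := atTop (α := ℝ))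
      have h2 := h0.sub ((tendsto_const_nhds (x := Real.log C)).div_atTop tendsto_id)
      simpa using h2
    filter_upwards [eventually_ge_atTop (1:ℝ), eventually_gt_atTop (0:ℝ),
      h1.eventually (eventually_gt_nhds hεb)] with t h1t h0t h2t
    have hft := hCb t h1t
    have hfp := hpos hβ (le_trans zero_le_one h1t)
    have hlog1 : Real.log (F β t) ≤ Real.log C + -(1 - ε) * t := by
      calc Real.log (F β t) ≤ Real.log (C * Real.exp (-(1 - ε) * t)) :=
            Real.log_le_log hfp hft
        _ = Real.log C + -(1 - ε) * t := by
            rw [Real.log_mul (ne_of_gt hC) (Real.exp_ne_zero _), Real.log_exp]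
    have key : (1 - ε) - Real.log C / t ≤ -Real.log (F β t) / t := by
      have e : (1 - ε) - Real.log C / t = ((1 - ε) * t - Real.log C) / t := by
        field_simp
      rw [e]
      gcongr
      linarith
    linarith
  · intro b hb
    have hlt : Tendsto (fun t : ℝ => Real.log (t + 1) / t) atTop (nhds 0) := by
      have hg : Tendsto (fun t : ℝ => Real.log 2 / t + Real.log t / t) atTop (nhds 0) := by
        have h1 := (tendsto_const_nhds (x := Real.log 2) (f := atTop (α := ℝ))).div_atTop
          tendsto_id
        have h2 := Real.isLittleO_log_id_atTop.tendsto_div_nhds_zero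
        simpa using h1.add h2
      refine squeeze_zero' ?_ ?_ hg
      · filter_upwards [eventually_ge_atTop (1:ℝ)] with t ht
        exact div_nonneg (Real.log_nonneg (by linarith)) (by linarith)
      · filter_upwards [eventually_ge_atTop (1:ℝ)] with t ht
        have h0t : (0:ℝ) < t := by linarith
        have hle : Real.log (t + 1) ≤ Real.log 2 + Real.log t := by
          calc Real.log (t + 1) ≤ Real.log (2 * t) :=
                Real.log_le_log (by linarith) (by linarith)
            _ = Real.log 2 + Real.log t := Real.log_mul two_ne_zero (ne_of_gt h0t)
        calc Real.log (t + 1) / t ≤ (Real.log 2 + Real.log t) / t := by gcongr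
          _ = Real.log 2 / t + Real.log t / t := add_div _ _ _
    have hψ : Tendsto (fun t : ℝ => (t + 1) / t + |β - 1| * (Real.log (t + 1) / t))
        atTop (nhds 1) := by
      have h1 : Tendsto (fun t : ℝ => (t + 1) / t) atTop (nhds 1) := by
        have h2 : Tendsto (fun t : ℝ => 1 + 1 / t) atTop (nhds 1) := by
          simpa using (tendsto_const_nhds (x := (1:ℝ)) (f := atTop (α := ℝ))).add
            ((tendsto_const_nhds (x := (1:ℝ))).div_atTop tendsto_id)
        refine h2.congr' ?_
        filter_upwards [eventually_gt_atTop (0:ℝ)] with t ht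
        field_simp
      simpa using h1.add ((tendsto_const_nhds (x := |β - 1|)).mul hlt)
    filter_upwards [eventually_ge_atTop (1:ℝ), hψ.eventually (eventually_lt_nhds hb)]
      with t h1t h2t
    have h0t : (0:ℝ) < t := by linarith
    have hl := hlow hβ h1t
    have hfp := hpos hβ (by linarith : (0:ℝ) ≤ t)
    have hlog2 : -(t + 1) + -|β - 1| * Real.log (t + 1) ≤ Real.log (F β t) := by
      have hrw : Real.log (Real.exp (-(t + 1)) * (t + 1) ^ (-|β - 1|))
          = -(t + 1) + -|β - 1| * Real.log (t + 1) := by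
        rw [Real.log_mul (Real.exp_ne_zero _)
          (ne_of_gt (Real.rpow_pos_of_pos (by linarith) _)), Real.log_exp,
          Real.log_rpow (by linarith)]
      rw [← hrw]
      exact Real.log_le_log (mul_pos (Real.exp_pos _)
        (Real.rpow_pos_of_pos (by linarith) _)) hl
    have hq : -Real.log (F β t) / t ≤ (t + 1) / t + |β - 1| * (Real.log (t + 1) / t) := by
      have e : (t + 1) / t + |β - 1| * (Real.log (t + 1) / t)
          = ((t + 1) + |β - 1| * Real.log (t + 1)) / t := by ring
      rw [e]
      gcongr
      linarith
    linarith

end Stmt15Aux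

open Stmt15Aux in
theorem stmt15 (β : ℝ) (hβ : 0 < β)
    (f : ℝ → ℝ)
    (hf : ∀ t : ℝ, f t = ∫ y in Set.Ioi t, Real.exp (-y) * y ^ (β - 1)) :
    StrictAntiOn f (Set.Ici 0) ∧
    ContinuousOn f (Set.Ici 0) ∧
    Set.BijOn f (Set.Ici 0) (Set.Ioc 0 (Real.Gamma β)) ∧
    ∃ g : ℝ → ℝ,
      (∀ t ≥ (0:ℝ), g (f t) = t) ∧
      (∀ u ∈ Set.Ioc (0:ℝ) (Real.Gamma β), f (g u) = u ∧ 0 ≤ g u) ∧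
      Tendsto (fun u => g u / Real.log (1 / u)) (nhdsWithin 0 (Set.Ioi 0))
        (nhds 1) := by
  have hΓ : 0 < Real.Gamma β := Real.Gamma_pos_of_pos hβ
  have hfF : ∀ t : ℝ, f t = F β t := fun t => hf t
  have hf0 : f 0 = Real.Gamma β := by
    rw [hfF, Real.Gamma_eq_integral hβ]; rfl
  have hanti : StrictAntiOn f (Set.Ici 0) := by
    intro s hs t ht hst
    have h1 := hsplit hβ (Set.mem_Ici.1 hs) hst.le
    have h2 := hmid hβ (Set.mem_Ici.1 hs) hst
    rw [hfF s, hfF t]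
    linarith
  have hfpos : ∀ t : ℝ, 0 ≤ t → 0 < f t := fun t ht => (hfF t) ▸ hpos hβ ht
  have hfle : ∀ t : ℝ, 0 ≤ t → f t ≤ Real.Gamma β := by
    intro t ht
    rcases eq_or_lt_of_le ht with h | h
    · rw [← h, hf0]
    · have := hanti (Set.self_mem_Ici) (Set.mem_Ici.2 ht) h
      rw [hf0] at this; linarith
  have hcont' : ContinuousOn f (Set.Ici 0) := by
    refine (hcont hβ).congr fun t _ => hfF t
  have hmaps : Set.MapsTo f (Set.Ici 0) (Set.Ioc 0 (Real.Gamma β)) := fun t ht =>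
    ⟨hfpos t ht, hfle t ht⟩
  have hsurj : Set.SurjOn f (Set.Ici 0) (Set.Ioc 0 (Real.Gamma β)) := by
    intro u hu
    have htf : Tendsto f atTop (nhds 0) := (htend0 hβ).congr fun t => (hfF t).symm
    obtain ⟨T, hTu, hT0⟩ := ((htf.eventually_lt_const hu.1).and (eventually_ge_atTop 0)).exists
    have hIVT := intermediate_value_Icc' hT0 (hcont'.mono (fun x hx => hx.1))
    have humem : u ∈ Set.Icc (f T) (f 0) := ⟨hTu.le, hf0 ▸ hu.2⟩
    obtain ⟨t, htm, htu⟩ := hIVT humem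
    exact ⟨t, htm.1, htu⟩
  have hbij : Set.BijOn f (Set.Ici 0) (Set.Ioc 0 (Real.Gamma β)) :=
    ⟨hmaps, hanti.injOn, hsurj⟩
  classical
  set g := Function.invFunOn f (Set.Ici 0) with hgdef
  have hinv := hbij.invOn_invFunOn
  have hgmem : ∀ u ∈ Set.Ioc (0:ℝ) (Real.Gamma β), g u ∈ Set.Ici 0 := by
    intro u hu
    obtain ⟨a, ha, hfa⟩ := hsurj hu
    exact Function.invFunOn_mem ⟨a, ha, hfa⟩
  have hgtop : Tendsto g (nhdsWithin 0 (Set.Ioi 0)) atTop := by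
    rw [tendsto_atTop]
    intro T
    set T' := max T 0 with hT'
    have hT'0 : (0:ℝ) ≤ T' := le_max_right _ _
    have hfT' := hfpos T' hT'0
    filter_upwards [Ioo_mem_nhdsGT_of_mem
      ⟨le_rfl, lt_min hfT' hΓ⟩] with u hu
    have huIoc : u ∈ Set.Ioc (0:ℝ) (Real.Gamma β) :=
      ⟨hu.1, (lt_of_lt_of_le hu.2 (min_le_right _ _)).le⟩
    have hfgu : f (g u) = u := hinv.2 huIoc
    by_contra hcon
    push_neg at hcon
    have hlt : g u < T' := lt_of_lt_of_le hcon (le_max_left _ _)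
    have h2 := hanti (hgmem u huIoc) (Set.mem_Ici.2 hT'0) hlt
    have h3 : u < f T' := lt_of_lt_of_le hu.2 (min_le_left _ _)
    rw [hfgu] at h2
    linarith
  have hmain : Tendsto (fun t => t / (-Real.log (f t))) atTop (nhds 1) := by
    have hlg : Tendsto (fun t => -Real.log (f t) / t) atTop (nhds 1) :=
      (hlogt hβ).congr fun t => by rw [hfF t]
    have h := hlg.inv₀ one_ne_zero
    rw [inv_one] at h
    exact h.congr fun t => by rw [inv_div]
  have hfinal : Tendsto (fun u => g u / Real.log (1 / u)) (nhdsWithin 0 (Set.Ioi 0))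
      (nhds 1) := by
    have hcomp := hmain.comp hgtop
    refine hcomp.congr' ?_
    filter_upwards [Ioo_mem_nhdsGT_of_mem ⟨le_rfl, hΓ⟩] with u hu
    have huIoc : u ∈ Set.Ioc (0:ℝ) (Real.Gamma β) := ⟨hu.1, hu.2.le⟩
    have hfgu : f (g u) = u := hinv.2 huIoc
    simp only [Function.comp_apply]
    rw [hfgu, one_div, Real.log_inv]
  exact ⟨hanti, hcont', hbij, g, fun t ht => hinv.1 ht,
    fun u hu => ⟨hinv.2 hu, hgmem u hu⟩, hfinal⟩
end

section
/- Let α ∈ (0,1) and let w_*(x) = x^α for x ≥ 0. Then for all x, y ≥ 0 with y ≤ x, one has x^α ≤ y^α + (x−y)^α, and moreover there exists s ∈ (0,1] (in fact s = 2 − 2^α works for the regime y = x/2) such that x^α ≤ y^α + (x−y)^α − s·min(y^α, (x−y)^α) holds for all x ≥ 2 and 0 ≤ y ≤ x with min(y, x−y) ≥ 1. -/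
open Real
open scoped NNReal

/-- Real subadditivity of `x ^ α` for `0 ≤ α ≤ 1`. -/
lemma stmt19_aux_subadd {α : ℝ} (hα0 : 0 ≤ α) (hα1 : α ≤ 1) {a b : ℝ}
    (ha : 0 ≤ a) (hb : 0 ≤ b) : (a + b) ^ α ≤ a ^ α + b ^ α := by
  have h := NNReal.rpow_add_le_add_rpow a.toNNReal b.toNNReal hα0 hα1
  have h' : ((a.toNNReal + b.toNNReal : ℝ≥0) : ℝ) ^ α
      ≤ ((a.toNNReal : ℝ)) ^ α + ((b.toNNReal : ℝ)) ^ α := by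
    exact_mod_cast h
  simpa [Real.coe_toNNReal a ha, Real.coe_toNNReal b hb] using h'

/-- Strengthened inequality: for `1 ≤ a ≤ b`, `(a+b)^α ≤ α * a^α + b^α`. -/
lemma stmt19_aux_key {α : ℝ} (hα0 : 0 < α) (hα1 : α < 1) {a b : ℝ}
    (ha : 1 ≤ a) (hab : a ≤ b) : (a + b) ^ α ≤ α * a ^ α + b ^ α := by
  have ha0 : 0 < a := lt_of_lt_of_le one_pos ha
  have hb0 : 0 < b := lt_of_lt_of_le one_pos (le_trans ha hab)
  have hs : (-1 : ℝ) ≤ a / b := le_trans (by norm_num) (div_nonneg ha0.le hb0.le)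
  have hbern := rpow_one_add_le_one_add_mul_self hs hα0.le hα1.le
  have heq : a + b = b * (1 + a / b) := by
    field_simp
    ring
  have h1 : (a + b) ^ α = b ^ α * (1 + a / b) ^ α := by
    rw [heq, Real.mul_rpow hb0.le (by positivity)]
  have h2 : b ^ α * (1 + a / b) ^ α ≤ b ^ α * (1 + α * (a / b)) :=
    mul_le_mul_of_nonneg_left hbern (Real.rpow_nonneg hb0.le _)
  have h3 : b ^ α * (1 + α * (a / b)) = b ^ α + α * (a * b ^ (α - 1)) := by
    have : b ^ α * (a / b) = a * b ^ (α - 1) := by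
      rw [Real.rpow_sub hb0, Real.rpow_one]
      field_simp
    rw [mul_add, mul_one, mul_comm α, ← mul_assoc, this]
    ring
  have h4 : a * b ^ (α - 1) ≤ a ^ α := by
    have : b ^ (α - 1) ≤ a ^ (α - 1) :=
      Real.rpow_le_rpow_of_nonpos ha0 hab (by linarith)
    calc a * b ^ (α - 1) ≤ a * a ^ (α - 1) :=
          mul_le_mul_of_nonneg_left this ha0.le
      _ = a ^ α := by
          nth_rewrite 1 [← Real.rpow_one a]
          rw [← Real.rpow_add ha0]
          norm_num
  calc (a + b) ^ α ≤ b ^ α + α * (a * b ^ (α - 1)) := by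
        rw [h1]; rw [h3] at h2; exact h2
    _ ≤ b ^ α + α * a ^ α := by nlinarith
    _ = α * a ^ α + b ^ α := by ring

theorem stmt19 (α : ℝ) (hα0 : 0 < α) (hα1 : α < 1) :
    (∀ x y : ℝ, 0 ≤ y → y ≤ x → x ^ α ≤ y ^ α + (x - y) ^ α) ∧
    ∃ s : ℝ, 0 < s ∧ s ≤ 1 ∧
      ∀ x y : ℝ, 2 ≤ x → 0 ≤ y → y ≤ x → 1 ≤ min y (x - y) →
        x ^ α ≤ y ^ α + (x - y) ^ α - s * min (y ^ α) ((x - y) ^ α) := by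
  constructor
  · intro x y hy hyx
    have := stmt19_aux_subadd hα0.le hα1.le hy (sub_nonneg.2 hyx)
    simpa using this
  · refine ⟨1 - α, by linarith, by linarith, ?_⟩
    intro x y hx hy hyx hmin
    have h1y : 1 ≤ y := le_trans hmin (min_le_left _ _)
    have h1z : 1 ≤ x - y := le_trans hmin (min_le_right _ _)
    rcases le_total y (x - y) with h | h
    · have hminα : min (y ^ α) ((x - y) ^ α) = y ^ α :=
        min_eq_left (Real.rpow_le_rpow (by linarith) h hα0.le)
      have hkey := stmt19_aux_key hα0 hα1 h1y h
      rw [hminα]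
      have hxeq : y + (x - y) = x := by ring
      rw [hxeq] at hkey
      linarith
    · have hminα : min (y ^ α) ((x - y) ^ α) = (x - y) ^ α :=
        min_eq_right (Real.rpow_le_rpow (by linarith) h hα0.le)
      have hkey := stmt19_aux_key hα0 hα1 h1z h
      rw [hminα]
      have hxeq : (x - y) + y = x := by ring
      rw [hxeq] at hkey
      linarith
end
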